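/- Let p be a prime, let S be a cyclic p-gonal Riemann surface of genus g ≥ 2 whose p-gonal group ⟨φ⟩ is the unique p-gonal group of S, and let C be an irreducible algebraic curve model of S defined over a subfield K ⊆ ℂ, on which φ is given by a rational map with coefficients in the algebraic closure K̄ of K in ℂ. Then φ is defined over an extension K₁ of K with [K₁ : K] ≤ p−1; namely, the subgroup A = {σ ∈ Gal(K̄/K) : φ^σ = φ} has index at most p−1 in Gal(K̄/K), since for every σ ∈ Gal(K̄/K) the conjugate φ^σ lies in {φ, φ^2, …, φ^{p−1}}, and φ is defined over the fixed field K₁ of A. -/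

import Mathlib

/-!
We model a smooth projective curve over an algebraically closed field `F` by its function
field: a field with an `F`-algebra structure.  Automorphisms of the curve correspond to
`F`-algebra automorphisms of the function field, and the quotient by a finite automorphism
group has genus zero iff the corresponding fixed field is a rational function field.
-/

open Polynomial IntermediateField Subgroup

noncomputable section

/-- The polynomial `F(x) = ∏ (x - a j)^(n j)`. -/
def gonalPoly {F : Type} [Field F] {m : ℕ} (a : Fin m → F) (n : Fin m → ℕ) : Polynomial F :=
  ∏ j, (Polynomial.X - Polynomial.C (a j)) ^ (n j)

/-- The defining polynomial `y^p - ∏ (x - a j)^(n j)` of the affine `p`-gonal curve,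
with `x = X 0` and `y = X 1`. -/
def gonalCurve (p : ℕ) {F : Type} [Field F] {m : ℕ} (a : Fin m → F) (n : Fin m → ℕ) :
    MvPolynomial (Fin 2) F :=
  MvPolynomial.X 1 ^ p - Polynomial.eval₂ MvPolynomial.C (MvPolynomial.X 0) (gonalPoly a n)

/-- Coordinate ring of the affine curve `y^p = ∏ (x - a j)^(n j)`. -/
abbrev gonalRing (p : ℕ) {F : Type} [Field F] {m : ℕ} (a : Fin m → F) (n : Fin m → ℕ) :=
  MvPolynomial (Fin 2) F ⧸ Ideal.span {gonalCurve p a n}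

/-- Function field of the affine curve `y^p = ∏ (x - a j)^(n j)`. -/
abbrev gonalFF (p : ℕ) {F : Type} [Field F] {m : ℕ} (a : Fin m → F) (n : Fin m → ℕ) :=
  FractionRing (gonalRing p a n)

/-- The coordinate function `x` in the function field. -/
def xFn (p : ℕ) {F : Type} [Field F] {m : ℕ} (a : Fin m → F) (n : Fin m → ℕ) :
    gonalFF p a n :=
  algebraMap (gonalRing p a n) (gonalFF p a n) (Ideal.Quotient.mk _ (MvPolynomial.X 0))

/-- The coordinate function `y` in the function field. -/
def yFn (p : ℕ) {F : Type} [Field F] {m : ℕ} (a : Fin m → F) (n : Fin m → ℕ) :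
    gonalFF p a n :=
  algebraMap (gonalRing p a n) (gonalFF p a n) (Ideal.Quotient.mk _ (MvPolynomial.X 1))

/-- The branch data of a `p`-gonal curve: distinct branch values `a j` with local exponents
`n j ∈ {1, …, p-1}` satisfying `n 1 + ⋯ + n m ≡ 0 (mod p)`. -/
def GonalData (p : ℕ) {F : Type} [Field F] {m : ℕ} (a : Fin m → F) (n : Fin m → ℕ) : Prop :=
  Function.Injective a ∧ (∀ j, 1 ≤ n j ∧ n j ≤ p - 1) ∧ p ∣ ∑ j, n j


section
variable {F E : Type*} [Field F] [Field E] [Algebra F E]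

lemma mem_fixedField_zpowers_iff (χ : E ≃ₐ[F] E) (x : E) :
    x ∈ IntermediateField.fixedField (Subgroup.zpowers χ) ↔ χ x = x := by
  constructor
  · intro h; exact h ⟨χ, Subgroup.mem_zpowers χ⟩
  · intro h g
    have hle : Subgroup.zpowers χ ≤ MulAction.stabilizer (E ≃ₐ[F] E) x :=
      Subgroup.zpowers_le.mpr h
    exact hle g.2

def algEquivToRingAut : (E ≃ₐ[F] E) →* RingAut E where
  toFun e := (e : E ≃+* E)
  map_one' := rfl
  map_mul' _ _ := rfl

lemma algEquivToRingAut_injective :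
    Function.Injective (algEquivToRingAut (F := F) (E := E)) := by
  intro a b h
  ext x
  exact congrArg (fun (e : E ≃+* E) => e x) h

lemma algEquiv_pow_apply (e : E ≃ₐ[F] E) (k : ℕ) (x : E) :
    (e ^ k) x = ((e : E ≃+* E) ^ k) x :=
  congrArg (fun (f : E ≃+* E) => f x) (map_pow algEquivToRingAut e k)

end

noncomputable def ratFuncTwist {K Kbar : Type} [Field K] [Field Kbar] [Algebra K Kbar]
    (σ : Kbar ≃ₐ[K] Kbar) : RatFunc Kbar ≃+* RatFunc Kbar :=
  IsFractionRing.ringEquivOfRingEquiv (A := Polynomial Kbar) (B := Polynomial Kbar)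
    (Polynomial.mapEquiv σ.toRingEquiv)

lemma ratFuncTwist_algebraMap {K Kbar : Type} [Field K] [Field Kbar] [Algebra K Kbar]
    (σ : Kbar ≃ₐ[K] Kbar) (c : Kbar) :
    ratFuncTwist σ (algebraMap Kbar (RatFunc Kbar) c) = algebraMap Kbar (RatFunc Kbar) (σ c) := by
  have h1 : algebraMap Kbar (RatFunc Kbar) c
      = algebraMap (Polynomial Kbar) (RatFunc Kbar) (Polynomial.C c) := by
    rw [IsScalarTower.algebraMap_apply Kbar (Polynomial Kbar) (RatFunc Kbar)]; simp
  have h2 : algebraMap Kbar (RatFunc Kbar) (σ c)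
      = algebraMap (Polynomial Kbar) (RatFunc Kbar) (Polynomial.C (σ c)) := by
    rw [IsScalarTower.algebraMap_apply Kbar (Polynomial Kbar) (RatFunc Kbar)]; simp
  rw [h1, h2, ratFuncTwist, IsFractionRing.ringEquivOfRingEquiv_algebraMap]
  simp

section conj
variable (p : ℕ) (hp : p.Prime)
    (K : Type) [Field K]
    (Kbar : Type) [Field Kbar] [Algebra K Kbar]
    (S : Type) [Field S] [Algebra Kbar S]
    (φ : S ≃ₐ[Kbar] S)
    (hord : orderOf φ = p)
    (hgonal : Nonempty ((IntermediateField.fixedField (Subgroup.zpowers φ)) ≃ₐ[Kbar]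
      RatFunc Kbar))
    (hunique : ∀ ψ : S ≃ₐ[Kbar] S, orderOf ψ = p →
      Nonempty ((IntermediateField.fixedField (Subgroup.zpowers ψ)) ≃ₐ[Kbar] RatFunc Kbar) →
      Subgroup.zpowers ψ = Subgroup.zpowers φ)
    (ρ : (Kbar ≃ₐ[K] Kbar) →* (S ≃+* S))
    (hsemi : ∀ (σ : Kbar ≃ₐ[K] Kbar) (c : Kbar),
      ρ σ (algebraMap Kbar S c) = algebraMap Kbar S (σ c))

include hp hord hgonal hunique hsemi in
lemma conj_pow_lemma (σ : Kbar ≃ₐ[K] Kbar) :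
    ∃ k, 1 ≤ k ∧ k ≤ p - 1 ∧ ∀ s : S, ρ σ (φ s) = (φ ^ k) (ρ σ s) := by
  set u : S ≃+* S := ρ σ with hu
  have husymm : ∀ c : Kbar, u.symm (algebraMap Kbar S c) = algebraMap Kbar S (σ.symm c) := by
    intro c
    have h := hsemi σ (σ.symm c)
    rw [AlgEquiv.apply_symm_apply] at h
    rw [← h, RingEquiv.symm_apply_apply]
  set ringψ : S ≃+* S := (u.symm.trans (φ : S ≃+* S)).trans u with hrψ
  have hringψ : ∀ s : S, ringψ s = u (φ (u.symm s)) := fun s => rfl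
  have hcomm : ∀ c : Kbar, ringψ (algebraMap Kbar S c) = algebraMap Kbar S c := by
    intro c
    rw [hringψ, husymm]
    erw [φ.commutes]
    rw [hsemi, AlgEquiv.apply_symm_apply]
  set ψ : S ≃ₐ[Kbar] S := AlgEquiv.ofRingEquiv hcomm with hψ
  have hψapp : ∀ s : S, ψ s = u (φ (u.symm s)) := fun s => rfl
  have hψr : algEquivToRingAut ψ = ringψ := rfl
  -- order of ψ
  have hsemic : SemiconjBy u (algEquivToRingAut φ) ringψ := by
    show u * _ = _ * u
    ext s
    show u (φ s) = ringψ (u s)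
    rw [hringψ, RingEquiv.symm_apply_apply]
  have hordψ : orderOf ψ = p := by
    have h1 : orderOf ψ = orderOf (algEquivToRingAut ψ) :=
      (orderOf_injective _ algEquivToRingAut_injective ψ).symm
    have h2 : orderOf (algEquivToRingAut φ) = orderOf ringψ := hsemic.orderOf_eq u
    have h3 : orderOf (algEquivToRingAut φ) = orderOf φ :=
      orderOf_injective _ algEquivToRingAut_injective φ
    rw [h1, hψr, ← h2, h3, hord]
  -- fixed field of ψ is rational
  have hfix : ∀ x : S, x ∈ IntermediateField.fixedField (Subgroup.zpowers ψ) ↔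
      φ (u.symm x) = u.symm x := by
    intro x
    rw [mem_fixedField_zpowers_iff]
    constructor
    · intro h
      have h2 := hψapp x
      rw [h] at h2
      have h3 := congrArg u.symm h2.symm
      rwa [RingEquiv.symm_apply_apply] at h3
    · intro h
      rw [hψapp, h, RingEquiv.apply_symm_apply]
  obtain ⟨r⟩ := hgonal
  set e₁ : (IntermediateField.fixedField (Subgroup.zpowers ψ)) ≃+*
      (IntermediateField.fixedField (Subgroup.zpowers φ)) :=
    { toFun := fun x => ⟨u.symm x.1, (mem_fixedField_zpowers_iff φ _).mpr ((hfix x.1).mp x.2)⟩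
      invFun := fun y => ⟨u y.1, (hfix _).mpr (by
        rw [RingEquiv.symm_apply_apply]
        exact (mem_fixedField_zpowers_iff φ _).mp y.2)⟩
      left_inv := fun x => Subtype.ext (u.apply_symm_apply x.1)
      right_inv := fun y => Subtype.ext (u.symm_apply_apply y.1)
      map_mul' := fun x y => Subtype.ext (map_mul u.symm x.1 y.1)
      map_add' := fun x y => Subtype.ext (map_add u.symm x.1 y.1) } with he₁
  set full : (IntermediateField.fixedField (Subgroup.zpowers ψ)) ≃+* RatFunc Kbar :=
    (e₁.trans r.toRingEquiv).trans (ratFuncTwist σ) with hfull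
  have hfullcomm : ∀ c : Kbar,
      full (algebraMap Kbar _ c) = algebraMap Kbar (RatFunc Kbar) c := by
    intro c
    have hval : (algebraMap Kbar (IntermediateField.fixedField (Subgroup.zpowers ψ)) c : S)
        = algebraMap Kbar S c := rfl
    have he1 : e₁ (algebraMap Kbar _ c)
        = algebraMap Kbar (IntermediateField.fixedField (Subgroup.zpowers φ)) (σ.symm c) := by
      apply Subtype.ext
      show u.symm ((algebraMap Kbar (IntermediateField.fixedField (Subgroup.zpowers ψ)) c : S))
        = _
      rw [hval, husymm]
      rfl
    show ratFuncTwist σ (r (e₁ (algebraMap Kbar _ c))) = _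
    rw [he1, r.commutes, ratFuncTwist_algebraMap, AlgEquiv.apply_symm_apply]
  have hiso : Nonempty ((IntermediateField.fixedField (Subgroup.zpowers ψ)) ≃ₐ[Kbar]
      RatFunc Kbar) := ⟨AlgEquiv.ofRingEquiv hfullcomm⟩
  -- uniqueness
  have hzp : ψ ∈ Subgroup.zpowers φ := by
    rw [← hunique ψ hordψ hiso]
    exact Subgroup.mem_zpowers ψ
  obtain ⟨k, hk⟩ := Subgroup.mem_zpowers_iff.mp hzp
  have hp0 : (0 : ℤ) < (p : ℤ) := by exact_mod_cast hp.pos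
  set k' : ℕ := (k % (p : ℤ)).toNat with hk'
  have hkk : φ ^ k' = ψ := by
    have h1 : ((k' : ℤ)) = k % (p : ℤ) := Int.toNat_of_nonneg (Int.emod_nonneg k hp0.ne')
    calc φ ^ k' = φ ^ ((k' : ℤ)) := (zpow_natCast φ k').symm
      _ = φ ^ (k % (p : ℤ)) := by rw [h1]
      _ = φ ^ (k % (orderOf φ : ℤ)) := by rw [hord]
      _ = φ ^ k := zpow_mod_orderOf _ _
      _ = ψ := hk
  have hk'lt : k' < p := by
    have h4 := Int.emod_lt_of_pos k hp0
    have h5 := Int.emod_nonneg k hp0.ne'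
    omega
  have hk'ne : k' ≠ 0 := by
    intro h0
    rw [h0, pow_zero] at hkk
    rw [← hkk] at hordψ
    have := hp.one_lt
    simp only [orderOf_one] at hordψ
    omega
  refine ⟨k', Nat.one_le_iff_ne_zero.mpr hk'ne, Nat.le_pred_of_lt hk'lt, ?_⟩
  intro s
  have := congrArg (fun (e : S ≃ₐ[Kbar] S) => e (u s)) hkk
  rw [hψapp, RingEquiv.symm_apply_apply] at this
  exact this.symm

end conj


lemma finrank_fixedField_le_bound {K Kbar : Type} [Field K] [Field Kbar] [Algebra K Kbar]
    [IsAlgClosure K Kbar] [CharZero K]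
    (A : Subgroup (Kbar ≃ₐ[K] Kbar)) [Finite ((Kbar ≃ₐ[K] Kbar) ⧸ A)] (d : ℕ)
    (hle : A.index ≤ d) :
    FiniteDimensional K (IntermediateField.fixedField A) ∧
      Module.finrank K (IntermediateField.fixedField A) ≤ d := by
  haveI : CharZero Kbar := charZero_of_injective_algebraMap (algebraMap K Kbar).injective
  haveI : IsAlgClosed Kbar := IsAlgClosure.isAlgClosed K
  haveI : Normal K Kbar := IsAlgClosure.normal K Kbar
  haveI : Algebra.IsAlgebraic K Kbar := IsAlgClosure.isAlgebraic
  set L := IntermediateField.fixedField A with hL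
  -- step 1 : every element of L has degree at most d over K
  have keystep : ∀ x : Kbar, x ∈ L → Module.finrank K K⟮x⟯ ≤ d := by
    intro x hx
    have hint : IsIntegral K x := Algebra.IsIntegral.isIntegral x
    rw [IntermediateField.adjoin.finrank hint]
    have hsep : (minpoly K x).Separable := Algebra.IsSeparable.isSeparable K x
    have hsplit : Splits ((minpoly K x).map (algebraMap K Kbar)) := IsAlgClosed.splits _
    rw [← Polynomial.card_rootSet_eq_natDegree hsep hsplit]
    have hwd : ∀ a b : Kbar ≃ₐ[K] Kbar, a⁻¹ * b ∈ A → a x = b x := by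
      intro a b hab
      have hfix : (a⁻¹ * b) x = x := hx ⟨a⁻¹ * b, hab⟩
      have : b x = a ((a⁻¹ * b) x) := by
        rw [← AlgEquiv.mul_apply, ← mul_assoc, mul_inv_cancel, one_mul]
      rw [this, hfix]
    set q : ((Kbar ≃ₐ[K] Kbar) ⧸ A) → Kbar := Quotient.lift (fun σ => σ x)
      (fun a b hab => hwd a b (QuotientGroup.leftRel_apply.mp hab)) with hq
    have hroot : ∀ σ : Kbar ≃ₐ[K] Kbar, σ x ∈ (minpoly K x).rootSet Kbar := by
      intro σ
      rw [Polynomial.mem_rootSet]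
      refine ⟨minpoly.ne_zero hint, ?_⟩
      rw [show (aeval (σ x)) (minpoly K x) = σ.toAlgHom ((aeval x) (minpoly K x)) from
        Polynomial.aeval_algHom_apply σ.toAlgHom x (minpoly K x), minpoly.aeval]
      simp
    set qq : ((Kbar ≃ₐ[K] Kbar) ⧸ A) → (minpoly K x).rootSet Kbar :=
      fun c => ⟨q c, by
        refine Quotient.inductionOn c ?_
        intro σ
        exact hroot σ⟩ with hqq
    have hsurj : Function.Surjective qq := by
      rintro ⟨y, hy⟩
      rw [Polynomial.mem_rootSet] at hy
      obtain ⟨σ, hσ⟩ := minpoly.exists_algEquiv_of_root'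
        (Algebra.IsAlgebraic.isAlgebraic x) hy.2
      exact ⟨QuotientGroup.mk σ, Subtype.ext hσ⟩
    have hcard := Nat.card_le_card_of_surjective qq hsurj
    rw [Nat.card_eq_fintype_card (α := (minpoly K x).rootSet Kbar)] at hcard
    calc Fintype.card ((minpoly K x).rootSet Kbar)
        ≤ Nat.card ((Kbar ≃ₐ[K] Kbar) ⧸ A) := hcard
      _ = A.index := rfl
      _ ≤ d := hle
  -- step 2 : choose an element of maximal degree
  set SS : Set ℕ := (fun x : Kbar => Module.finrank K K⟮x⟯) '' (L : Set Kbar) with hSS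
  have hne : SS.Nonempty := ⟨_, ⟨0, L.zero_mem, rfl⟩⟩
  have hbdd : BddAbove SS := by
    refine ⟨d, ?_⟩
    rintro _ ⟨x, hx, rfl⟩
    exact keystep x hx
  obtain ⟨x₀, hx₀L, hx₀max⟩ : ∃ x₀ ∈ L, Module.finrank K K⟮x₀⟯ = sSup SS :=
    Nat.sSup_mem hne hbdd
  have hmax : ∀ y : Kbar, y ∈ L → Module.finrank K K⟮y⟯ ≤ Module.finrank K K⟮x₀⟯ := by
    intro y hy
    rw [hx₀max]
    exact le_csSup hbdd ⟨y, hy, rfl⟩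
  have hx₀int : IsIntegral K x₀ := Algebra.IsIntegral.isIntegral x₀
  haveI : FiniteDimensional K K⟮x₀⟯ := IntermediateField.adjoin.finiteDimensional hx₀int
  -- step 3 : L = K⟮x₀⟯
  have hadj_le : K⟮x₀⟯ ≤ L := by
    rw [IntermediateField.adjoin_le_iff]
    simpa using hx₀L
  have hL_le : L ≤ K⟮x₀⟯ := by
    intro y hy
    set L' : IntermediateField K Kbar := K⟮x₀⟯ ⊔ K⟮y⟯ with hL'
    haveI : FiniteDimensional K K⟮y⟯ :=
      IntermediateField.adjoin.finiteDimensional (Algebra.IsIntegral.isIntegral y)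
    haveI : FiniteDimensional K L' := IntermediateField.finiteDimensional_sup _ _
    obtain ⟨α, hα⟩ := Field.exists_primitive_element K L'
    have hαval : K⟮(α : Kbar)⟯ = L' := by
      have h1 : (IntermediateField.adjoin K {α}).map L'.val
          = IntermediateField.adjoin K (L'.val '' {α}) := IntermediateField.adjoin_map K _ _
      rw [hα] at h1
      rw [Set.image_singleton] at h1
      have h2 : (⊤ : IntermediateField K L').map L'.val = L' := by
        rw [← AlgHom.fieldRange_eq_map, IntermediateField.fieldRange_val]
      rw [h2] at h1
      exact h1.symm
    have hL'L : L' ≤ L := by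
      apply sup_le
      · exact hadj_le
      · rw [IntermediateField.adjoin_le_iff]; simpa using hy
    have hαL : (α : Kbar) ∈ L := by
      have hm : (α : Kbar) ∈ K⟮(α : Kbar)⟯ := IntermediateField.mem_adjoin_simple_self K _
      rw [hαval] at hm
      exact hL'L hm
    have hfr : Module.finrank K L' ≤ Module.finrank K K⟮x₀⟯ := by
      rw [← hαval]
      exact hmax _ hαL
    have hx₀L' : K⟮x₀⟯ ≤ L' := le_sup_left
    have := IntermediateField.eq_of_le_of_finrank_le hx₀L' hfr
    rw [this]
    exact SetLike.le_def.mp le_sup_right (IntermediateField.mem_adjoin_simple_self K y)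
  have hLeq : IntermediateField.fixedField A = K⟮x₀⟯ := le_antisymm hL_le hadj_le
  constructor
  · rw [show L = K⟮x₀⟯ from hLeq]; infer_instance
  · rw [show L = K⟮x₀⟯ from hLeq]; exact keystep x₀ hx₀L


theorem pGonal_aux
    (p : ℕ) (hp : p.Prime)
    (K : Type) [Field K] [Algebra K ℂ]
    (Kbar : Type) [Field Kbar] [Algebra K Kbar] [IsAlgClosure K Kbar]
    (S : Type) [Field S] [Algebra Kbar S]
    (φ : S ≃ₐ[Kbar] S)
    (ρ : (Kbar ≃ₐ[K] Kbar) →* (S ≃+* S))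
    (hconj : ∀ σ : Kbar ≃ₐ[K] Kbar, ∃ k, 1 ≤ k ∧ k ≤ p - 1 ∧
        ∀ s : S, ρ σ (φ s) = (φ ^ k) (ρ σ s)) :
    ∃ A : Subgroup (Kbar ≃ₐ[K] Kbar),
      (∀ σ, σ ∈ A ↔ ∀ s : S, ρ σ (φ s) = φ (ρ σ s)) ∧
      A.index ≤ p - 1 ∧
      (∀ σ : Kbar ≃ₐ[K] Kbar, ∃ k, 1 ≤ k ∧ k ≤ p - 1 ∧
        ∀ s : S, ρ σ (φ s) = (φ ^ k) (ρ σ s)) ∧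
      FiniteDimensional K (IntermediateField.fixedField A) ∧
      Module.finrank K (IntermediateField.fixedField A) ≤ p - 1 := by
  classical
  haveI : CharZero K := (algebraMap K ℂ).charZero
  set φr : RingAut S := algEquivToRingAut φ with hφr
  set A : Subgroup (Kbar ≃ₐ[K] Kbar) :=
    (Subgroup.centralizer {φr}).comap ρ with hA
  have hmem : ∀ σ, σ ∈ A ↔ ∀ s : S, ρ σ (φ s) = φ (ρ σ s) := by
    intro σ
    rw [hA, Subgroup.mem_comap, Subgroup.mem_centralizer_iff]
    simp only [Set.mem_singleton_iff, forall_eq]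
    constructor
    · intro h s
      exact (congrArg (fun (e : S ≃+* S) => e s) h).symm
    · intro h
      ext s
      exact (h s).symm
  -- the conjugation map
  set c : (Kbar ≃ₐ[K] Kbar) → RingAut S := fun σ => ρ σ * φr * (ρ σ)⁻¹ with hc
  have hcS : ∀ σ, ∃ k, 1 ≤ k ∧ k ≤ p - 1 ∧ c σ = algEquivToRingAut (φ ^ k) := by
    intro σ
    obtain ⟨k, hk1, hk2, hk⟩ := hconj σ
    refine ⟨k, hk1, hk2, ?_⟩
    ext s
    show (ρ σ) (φr ((ρ σ)⁻¹ s)) = _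
    have h1 := hk (((ρ σ)⁻¹ : RingAut S) s)
    have h2 : (ρ σ) ((((ρ σ))⁻¹ : RingAut S) s) = s := by
      exact (ρ σ).apply_symm_apply s
    calc (ρ σ) (φr ((((ρ σ))⁻¹ : RingAut S) s))
        = (φ ^ k) ((ρ σ) ((((ρ σ))⁻¹ : RingAut S) s)) := h1
      _ = (φ ^ k) s := by rw [h2]
      _ = (algEquivToRingAut (φ ^ k)) s := rfl
  set T : Finset (RingAut S) :=
    (Finset.Icc 1 (p - 1)).image (fun k => algEquivToRingAut (φ ^ k)) with hT
  have hcT : ∀ σ, c σ ∈ T := by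
    intro σ
    obtain ⟨k, hk1, hk2, hk⟩ := hcS σ
    rw [hT, Finset.mem_image]
    exact ⟨k, Finset.mem_Icc.mpr ⟨hk1, hk2⟩, hk.symm⟩
  have hwd : ∀ a b : Kbar ≃ₐ[K] Kbar, a⁻¹ * b ∈ A → c a = c b := by
    intro a b hab
    have hb : b = a * (a⁻¹ * b) := by group
    have hcomm : φr * ρ (a⁻¹ * b) = ρ (a⁻¹ * b) * φr :=
      ((Subgroup.mem_centralizer_iff.mp (Subgroup.mem_comap.mp hab)) φr rfl)
    rw [hc]
    simp only
    rw [hb, map_mul, mul_inv_rev]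
    have h3 : ρ (a⁻¹ * b) * φr * (ρ (a⁻¹ * b))⁻¹ = φr := by
      rw [← hcomm, mul_inv_cancel_right]
    have h4 : ρ a * ρ (a⁻¹ * b) * φr * ((ρ (a⁻¹ * b))⁻¹ * (ρ a)⁻¹) = ρ a * φr * (ρ a)⁻¹ := by
      calc ρ a * ρ (a⁻¹ * b) * φr * ((ρ (a⁻¹ * b))⁻¹ * (ρ a)⁻¹)
          = ρ a * (ρ (a⁻¹ * b) * φr * (ρ (a⁻¹ * b))⁻¹) * (ρ a)⁻¹ := by group
        _ = ρ a * φr * (ρ a)⁻¹ := by rw [h3]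
    exact h4.symm
  set g : ((Kbar ≃ₐ[K] Kbar) ⧸ A) → {x // x ∈ T} :=
    Quotient.lift (fun σ => (⟨c σ, hcT σ⟩ : {x // x ∈ T}))
      (fun a b hab => Subtype.ext (hwd a b (QuotientGroup.leftRel_apply.mp hab))) with hg
  have hginj : Function.Injective g := by
    intro x y
    refine Quotient.inductionOn₂ x y ?_
    intro a b h
    have h' : c a = c b := congrArg Subtype.val h
    have h2 : φr * ((ρ a)⁻¹ * ρ b) = ((ρ a)⁻¹ * ρ b) * φr := by
      have h3 := congrArg (fun z => (ρ a)⁻¹ * z * ρ b) h'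
      simp only [hc] at h3
      calc φr * ((ρ a)⁻¹ * ρ b)
          = (ρ a)⁻¹ * (ρ a * φr * (ρ a)⁻¹) * ρ b := by group
        _ = (ρ a)⁻¹ * (ρ b * φr * (ρ b)⁻¹) * ρ b := by rw [h3]
        _ = ((ρ a)⁻¹ * ρ b) * φr := by group
    have hmemA : a⁻¹ * b ∈ A := by
      rw [hA, Subgroup.mem_comap]
      rw [Subgroup.mem_centralizer_iff]
      intro z hz
      rw [Set.mem_singleton_iff] at hz
      subst hz
      rw [map_mul, map_inv]
      exact h2
    exact (QuotientGroup.eq (s := A)).mpr hmemA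
  haveI hfinq : Finite ((Kbar ≃ₐ[K] Kbar) ⧸ A) := Finite.of_injective g hginj
  have hindex : A.index ≤ p - 1 := by
    rw [Subgroup.index_eq_card]
    calc Nat.card ((Kbar ≃ₐ[K] Kbar) ⧸ A)
        ≤ Nat.card {x // x ∈ T} := Nat.card_le_card_of_injective g hginj
      _ = T.card := by rw [Nat.card_eq_fintype_card, Fintype.card_coe]
      _ ≤ (Finset.Icc 1 (p - 1)).card := Finset.card_image_le
      _ = p - 1 := by rw [Nat.card_Icc]; omega
  obtain ⟨hfd, hfr⟩ := finrank_fixedField_le_bound A (p - 1) hindex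
  exact ⟨A, hmem, hindex, hconj, hfd, hfr⟩


set_option synthInstance.maxHeartbeats 1000000

/-- **Claim 1.** Let `S` be a cyclic `p`-gonal Riemann surface of genus `g ≥ 2` (given by
its function field over the algebraic closure `K̄` of a field of definition `K ⊆ ℂ`) whose
`p`-gonal group `⟨φ⟩` is unique, presented by a curve `C` defined over `K`; the latter is
encoded by the canonical semilinear action `ρ` of `Gal(K̄/K)` on the function field `S`
(applying `σ` to the coefficients of rational functions), which satisfies
`ρ σ ∘ algebraMap K̄ S = algebraMap K̄ S ∘ σ`.  The conjugate `φ^σ` is the automorphism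
`ρ σ ∘ φ ∘ (ρ σ)⁻¹`, and `φ` is defined over a subfield `L` of `K̄` iff `φ^σ = φ` for all `σ`
fixing `L`.  Then the subgroup `A = {σ : φ^σ = φ}` of `Gal(K̄/K)` has index at most `p - 1`
(indeed `φ^σ ∈ {φ, φ², …, φ^{p-1}}` for every `σ`), and `φ` is defined over the fixed field
`K₁` of `A`, which satisfies `[K₁ : K] ≤ p - 1`. -/
theorem pGonal_automorphism_defined_over_small_extension
    (p : ℕ) (hp : p.Prime) (g : ℕ) (hg : 2 ≤ g)
    (K : Type) [Field K] [Algebra K ℂ]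
    (Kbar : Type) [Field Kbar] [Algebra K Kbar] [IsAlgClosure K Kbar]
    (S : Type) [Field S] [Algebra Kbar S]
    (φ : S ≃ₐ[Kbar] S)
    (hord : orderOf φ = p)
    (hgonal : Nonempty ((IntermediateField.fixedField (Subgroup.zpowers φ)) ≃ₐ[Kbar]
      RatFunc Kbar))
    -- `⟨φ⟩` is the unique `p`-gonal group of `S`
    (hunique : ∀ ψ : S ≃ₐ[Kbar] S, orderOf ψ = p →
      Nonempty ((IntermediateField.fixedField (Subgroup.zpowers ψ)) ≃ₐ[Kbar] RatFunc Kbar) →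
      Subgroup.zpowers ψ = Subgroup.zpowers φ)
    -- `S` has genus `g`, realized by a `p`-gonal model compatible with `φ`
    (m : ℕ) (a : Fin m → Kbar) (n : Fin m → ℕ) (ζ : Kbar)
    (hζ : IsPrimitiveRoot ζ p)
    (hdata : GonalData p a n)
    (hgenus : 2 * g + 2 * p = m * (p - 1) + 2)
    (hmodel : ∃ e : gonalFF p a n ≃ₐ[Kbar] S,
      φ (e (xFn p a n)) = e (xFn p a n) ∧
      φ (e (yFn p a n)) = algebraMap Kbar S ζ * e (yFn p a n))
    -- the canonical semilinear action of `Gal(K̄/K)` on `S` coming from the model of `S`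
    -- over `K`
    (ρ : (Kbar ≃ₐ[K] Kbar) →* (S ≃+* S))
    (hsemi : ∀ (σ : Kbar ≃ₐ[K] Kbar) (c : Kbar),
      ρ σ (algebraMap Kbar S c) = algebraMap Kbar S (σ c)) :
    ∃ A : Subgroup (Kbar ≃ₐ[K] Kbar),
      (∀ σ, σ ∈ A ↔ ∀ s : S, ρ σ (φ s) = φ (ρ σ s)) ∧
      A.index ≤ p - 1 ∧
      (∀ σ : Kbar ≃ₐ[K] Kbar, ∃ k, 1 ≤ k ∧ k ≤ p - 1 ∧
        ∀ s : S, ρ σ (φ s) = (φ ^ k) (ρ σ s)) ∧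
      FiniteDimensional K (IntermediateField.fixedField A) ∧
      Module.finrank K (IntermediateField.fixedField A) ≤ p - 1 := by
  have hconj : ∀ σ : Kbar ≃ₐ[K] Kbar, ∃ k, 1 ≤ k ∧ k ≤ p - 1 ∧
      ∀ s : S, ρ σ (φ s) = (φ ^ k) (ρ σ s) :=
    fun σ => conj_pow_lemma p hp K Kbar S φ hord hgonal hunique ρ hsemi σ
  exact pGonal_aux p hp K Kbar S φ ρ hconj
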